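/- Let a : ℕ → ℕ satisfy a(1)=1 and a(d) = (2d-1)!! − ∑_{k=1}^{d-1}(2d-2k-1)!!·a(k) for d ≥ 2. Then for all d ≥ 4, a(d) > (2d-4)·(2d-3)!!. -/
import Mathlib


/-- The double factorial `(2d-1)!! = ∏_{i=1}^d (2i-1)`, with `(-1)!! = oddDF 0 = 1`. -/
def oddDF (d : ℕ) : ℕ := ∏ i ∈ Finset.range d, (2 * i + 1)

lemma oddDF_succ (n : ℕ) : oddDF (n + 1) = oddDF n * (2 * n + 1) :=
  Finset.prod_range_succ _ _

lemma oddDF_pos (n : ℕ) : 0 < oddDF n :=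
  Finset.prod_pos fun i _ => by omega

lemma oddDF_mono_mul (j m n : ℕ) (h : j ≤ n) :
    oddDF (j + m) * oddDF n ≤ oddDF j * oddDF (n + m) := by
  unfold oddDF
  rw [Finset.prod_range_add, Finset.prod_range_add]
  have hP : (∏ i ∈ Finset.range m, (2 * (j + i) + 1))
      ≤ ∏ i ∈ Finset.range m, (2 * (n + i) + 1) :=
    Finset.prod_le_prod' (fun i _ => by omega)
  calc (∏ x ∈ Finset.range j, (2*x+1)) * (∏ i ∈ Finset.range m, (2*(j+i)+1))
        * ∏ x ∈ Finset.range n, (2*x+1)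
      = (∏ x ∈ Finset.range j, (2*x+1)) * (∏ x ∈ Finset.range n, (2*x+1))
        * ∏ i ∈ Finset.range m, (2*(j+i)+1) := by ring
    _ ≤ (∏ x ∈ Finset.range j, (2*x+1)) * (∏ x ∈ Finset.range n, (2*x+1))
        * ∏ i ∈ Finset.range m, (2*(n+i)+1) := Nat.mul_le_mul_left _ hP
    _ = (∏ x ∈ Finset.range j, (2*x+1)) * ((∏ x ∈ Finset.range n, (2*x+1))
        * ∏ i ∈ Finset.range m, (2*(n+i)+1)) := by ring

/-- If `a(1)=1` and `a(d) = (2d-1)!! − ∑_{k=1}^{d-1} (2d-2k-1)!!·a(k)` for `d ≥ 2`,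
then `a(d) > (2d-4)·(2d-3)!!` for all `d ≥ 4`. -/
theorem a_lower_bound (a : ℕ → ℕ) (h1 : a 1 = 1)
    (hrec : ∀ d, 2 ≤ d → a d = oddDF d - ∑ k ∈ Finset.Icc 1 (d - 1), oddDF (d - k) * a k) :
    ∀ d, 4 ≤ d → (2 * d - 4) * oddDF (d - 1) < a d := by
  have ha : ∀ k, 1 ≤ k → a k ≤ oddDF k := by
    intro k hk
    rcases eq_or_lt_of_le hk with h | h
    · rw [← h, h1]; decide
    · rw [hrec k h]; exact Nat.sub_le _ _
  -- small values
  have e2 : a 2 = 2 := by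
    rw [hrec 2 (by norm_num)]
    norm_num [Finset.Icc_self, h1]
    rfl
  have e3 : a 3 = 10 := by
    rw [hrec 3 (by norm_num)]
    rw [show (3:ℕ) - 1 = 1 + 1 from rfl, Finset.sum_Icc_succ_top (by norm_num),
      Finset.Icc_self, Finset.sum_singleton, h1, e2]
    rfl
  have e4 : a 4 = 74 := by
    rw [hrec 4 (by norm_num)]
    rw [show (4:ℕ) - 1 = 2 + 1 from rfl, Finset.sum_Icc_succ_top (by norm_num),
      show (2:ℕ) = 1 + 1 from rfl, Finset.sum_Icc_succ_top (by norm_num),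
      Finset.Icc_self, Finset.sum_singleton, h1, e2, e3]
    rfl
  have e5 : a 5 = 706 := by
    rw [hrec 5 (by norm_num)]
    rw [show (5:ℕ) - 1 = 3 + 1 from rfl, Finset.sum_Icc_succ_top (by norm_num),
      show (3:ℕ) = 2 + 1 from rfl, Finset.sum_Icc_succ_top (by norm_num),
      show (2:ℕ) = 1 + 1 from rfl, Finset.sum_Icc_succ_top (by norm_num),
      Finset.Icc_self, Finset.sum_singleton, h1, e2, e3, e4]
    rfl
  intro d hd
  rcases Nat.lt_or_ge d 6 with hd6 | hd6
  · interval_cases d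
    · rw [e4]; decide
    · rw [e5]; decide
  · obtain ⟨e, rfl⟩ : ∃ e, d = e + 6 := ⟨d - 6, by omega⟩
    set f : ℕ → ℕ := fun i => oddDF (e + 5 - i) * a (i + 1) with hf
    have hsum : ∑ k ∈ Finset.Icc 1 (e + 6 - 1), oddDF (e + 6 - k) * a k
        = ∑ i ∈ Finset.range (e + 5), f i := by
      rw [show e + 6 - 1 = e + 5 from rfl, ← Finset.Ico_add_one_right_eq_Icc,
        Finset.sum_Ico_eq_sum_range]
      apply Finset.sum_congr (by norm_num)
      intro i hi
      simp only [hf]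
      rw [show e + 6 - (1 + i) = e + 5 - i from by omega, Nat.add_comm 1 i]
    have hpeel : ∑ i ∈ Finset.range (e + 5), f i
        = (∑ i ∈ Finset.range (e + 1), f (i + 2)) + f 1 + f 0 + f (e + 3) + f (e + 4) := by
      rw [show e + 5 = (e + 4) + 1 from rfl, Finset.sum_range_succ,
        show e + 4 = (e + 3) + 1 from rfl, Finset.sum_range_succ,
        show e + 3 = (e + 2) + 1 from rfl, Finset.sum_range_succ',
        show e + 2 = (e + 1) + 1 from rfl, Finset.sum_range_succ']
    -- bounds on pieces
    have hmid : ∑ i ∈ Finset.range (e + 1), f (i + 2) ≤ (e + 1) * (15 * oddDF (e + 3)) := by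
      have := Finset.sum_le_card_nsmul (Finset.range (e + 1)) (fun i => f (i + 2))
        (15 * oddDF (e + 3)) ?_
      · simpa using this
      · intro i hi
        simp only [Finset.mem_range] at hi
        simp only [hf]
        rw [show e + 5 - (i + 2) = e + 3 - i from by omega]
        calc oddDF (e + 3 - i) * a (i + 2 + 1)
            ≤ oddDF (e + 3 - i) * oddDF (i + 3) :=
              Nat.mul_le_mul_left _ (ha _ (by omega))
          _ = oddDF (3 + i) * oddDF (e + 3 - i) := by rw [Nat.mul_comm, Nat.add_comm 3 i]
          _ ≤ oddDF 3 * oddDF ((e + 3 - i) + i) := oddDF_mono_mul 3 i (e + 3 - i) (by omega)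
          _ = 15 * oddDF (e + 3) := by
              rw [show (e + 3 - i) + i = e + 3 from by omega]; rfl
    have hf0 : f 0 = oddDF (e + 5) := by simp [hf, h1]
    have hf1 : f 1 ≤ 3 * oddDF (e + 4) := by
      simp only [hf]
      rw [show e + 5 - 1 = e + 4 from rfl, e2]
      omega
    have hfe3 : f (e + 3) ≤ 3 * oddDF (e + 4) := by
      simp only [hf]
      rw [show e + 5 - (e + 3) = 2 from by omega]
      have := ha (e + 3 + 1) (by omega)
      calc oddDF 2 * a (e + 3 + 1) ≤ oddDF 2 * oddDF (e + 4) :=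
            Nat.mul_le_mul_left _ this
        _ = 3 * oddDF (e + 4) := rfl
    have hfe4 : f (e + 4) ≤ oddDF (e + 5) := by
      simp only [hf]
      rw [show e + 5 - (e + 4) = 1 from by omega]
      have := ha (e + 4 + 1) (by omega)
      calc oddDF 1 * a (e + 4 + 1) ≤ oddDF 1 * oddDF (e + 5) :=
            Nat.mul_le_mul_left _ this
        _ = oddDF (e + 5) := by rw [show oddDF 1 = 1 from rfl, Nat.one_mul]
    have hS : ∑ i ∈ Finset.range (e + 5), f i
        ≤ (e + 1) * (15 * oddDF (e + 3)) + 6 * oddDF (e + 4) + 2 * oddDF (e + 5) := by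
      rw [hpeel]; omega
    -- key inequality
    have h4 : oddDF (e + 4) = oddDF (e + 3) * (2 * (e + 3) + 1) := oddDF_succ _
    have h5 : oddDF (e + 5) = oddDF (e + 4) * (2 * (e + 4) + 1) := oddDF_succ _
    have h6 : oddDF (e + 6) = oddDF (e + 5) * (2 * (e + 5) + 1) := oddDF_succ _
    have h3pos := oddDF_pos (e + 3)
    have hmain : (e + 1) * (15 * oddDF (e + 3)) + 6 * oddDF (e + 4) < oddDF (e + 5) := by
      rw [h5, h4]
      rw [show (e + 1) * (15 * oddDF (e + 3)) + 6 * (oddDF (e + 3) * (2 * (e + 3) + 1))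
          = (27 * e + 57) * oddDF (e + 3) from by ring,
        show oddDF (e + 3) * (2 * (e + 3) + 1) * (2 * (e + 4) + 1)
          = (4 * e ^ 2 + 32 * e + 63) * oddDF (e + 3) from by ring]
      exact Nat.mul_lt_mul_of_lt_of_le (by nlinarith) le_rfl h3pos
    have key : (∑ i ∈ Finset.range (e + 5), f i) + (2 * (e + 6) - 4) * oddDF (e + 6 - 1)
        < oddDF (e + 6) := by
      rw [show 2 * (e + 6) - 4 = 2 * e + 8 from by omega, show e + 6 - 1 = e + 5 from rfl]
      calc (∑ i ∈ Finset.range (e + 5), f i) + (2 * e + 8) * oddDF (e + 5)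
          ≤ ((e + 1) * (15 * oddDF (e + 3)) + 6 * oddDF (e + 4) + 2 * oddDF (e + 5))
            + (2 * e + 8) * oddDF (e + 5) := Nat.add_le_add_right hS _
        _ < oddDF (e + 5) + 2 * oddDF (e + 5) + (2 * e + 8) * oddDF (e + 5) := by omega
        _ = oddDF (e + 5) * (2 * (e + 5) + 1) := by ring
        _ = oddDF (e + 6) := h6.symm
    rw [hrec (e + 6) (by omega), hsum]
    omega
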